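/- arXiv:1703.06314 — 2 statements merged into one kernel-verified Lean document; each statement's English description precedes it below -/
import Mathlib

section
/- (Local-lemma existence of a good coloring.) Let q be a prime power and n ≥ 2. If e · 4q² · 2n(q+1) · (1 − 1/n)^{q−1} ≤ 1 (where e is the base of the natural logarithm) and moreover n²·(1 − 1/n²)^{q²} ≤ 2n(q+1)·(1 − 1/n)^{q−1}, then there exists a good coloring f : D × D → Fin n. -/
/-- The "slope `s`" relation on the affine plane `F × F`.  `some s` is the
relation of lines with slope `s`; `none` is the relation `R_∞` of vertical lines. -/
def slopeRel {F : Type*} [Field F] (s : Option F) (p r : F × F) : Prop :=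
  match s with
  | some s => p.1 ≠ r.1 ∧ r.2 - p.2 = s * (r.1 - p.1)
  | none => p.1 = r.1 ∧ p.2 ≠ r.2


instance slopeRel.decidable {F : Type*} [Field F] [DecidableEq F] (s : Option F)
    (p r : F × F) : Decidable (slopeRel s p r) := by
  cases s with
  | none => exact inferInstanceAs (Decidable (p.1 = r.1 ∧ p.2 ≠ r.2))
  | some m => exact inferInstanceAs (Decidable (p.1 ≠ r.1 ∧ r.2 - p.2 = m * (r.1 - p.1)))

lemma slopeRel_add {F : Type*} [Field F] (s : Option F) (a b c : F × F) :
    slopeRel s (a + c) (b + c) ↔ slopeRel s a b := by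
  cases s <;>
    simp [slopeRel, Prod.fst_add, Prod.snd_add, add_left_inj, add_sub_add_right_eq_sub]

open Finset in
lemma card_slopeRel {F : Type*} [Field F] [Fintype F] [DecidableEq F]
    (s : Option F) (p : F × F) :
    (univ.filter (fun y => slopeRel s p y)).card = Fintype.card F - 1 := by
  cases s with
  | none =>
      have key : (univ.filter (fun y : F × F => slopeRel none p y)).card
          = (univ.erase p.2).card := by
        refine Finset.card_bij' (fun y _ => y.2) (fun x _ => (p.1, x)) ?_ ?_ ?_ ?_
        · intro y hy
          rw [mem_filter] at hy; simp only [slopeRel] at hy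
          simp [Finset.mem_erase, Ne.symm hy.2.2]
        · intro x hx
          simp only [Finset.mem_erase] at hx
          rw [mem_filter]; simp [slopeRel, Ne.symm hx.1]
        · intro y hy
          rw [mem_filter] at hy; simp only [slopeRel] at hy
          obtain ⟨y1, y2⟩ := y
          simp only [Prod.mk.injEq, and_true]
          exact hy.2.1
        · intro x hx; rfl
      rw [key, Finset.card_erase_of_mem (Finset.mem_univ _), Finset.card_univ]
  | some m =>
      have key : (univ.filter (fun y : F × F => slopeRel (some m) p y)).card
          = (univ.erase p.1).card := by
        refine Finset.card_bij' (fun y _ => y.1)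
          (fun x _ => (x, p.2 + m * (x - p.1))) ?_ ?_ ?_ ?_
        · intro y hy
          rw [mem_filter] at hy; simp only [slopeRel] at hy
          simp [Finset.mem_erase, Ne.symm hy.2.1]
        · intro x hx
          simp only [Finset.mem_erase] at hx
          rw [mem_filter]; simp only [slopeRel, mem_univ, true_and]
          exact ⟨Ne.symm hx.1, by ring⟩
        · intro y hy
          rw [mem_filter] at hy; simp only [slopeRel] at hy
          have h2 := hy.2.2
          obtain ⟨y1, y2⟩ := y
          simp only [Prod.mk.injEq, true_and]
          simp only at h2 ⊢
          linear_combination -h2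
        · intro x hx; rfl
      rw [key, Finset.card_erase_of_mem (Finset.mem_univ _), Finset.card_univ]

open Finset

lemma card_ne_subtype {β : Type*} [Fintype β] [DecidableEq β] (j : β) :
    Fintype.card {b : β // b ≠ j} = Fintype.card β - 1 := by
  have : Fintype.card {b : β // b ≠ j} = Fintype.card β - Fintype.card {b : β // b = j} :=
    Fintype.card_subtype_compl _
  rw [this, Fintype.card_subtype_eq]

lemma card_pi_avoid {V β : Type*} [Fintype V] [Fintype β] [DecidableEq V] [DecidableEq β]
    (W : Finset V) (j : β) :
    Fintype.card {χ : V → β // ∀ y ∈ W, χ y ≠ j} =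
      (Fintype.card β - 1) ^ W.card * Fintype.card β ^ (Fintype.card V - W.card) := by
  classical
  have e : {χ : V → β // ∀ y ∈ W, χ y ≠ j} ≃ ∀ y : V, {b : β // y ∈ W → b ≠ j} :=
    Equiv.subtypePiEquivPi (p := fun (y : V) (b : β) => y ∈ W → b ≠ j)
  rw [Fintype.card_congr e, Fintype.card_pi]
  rw [← Finset.prod_mul_prod_compl W]
  have h1 : ∀ y ∈ W, Fintype.card {b : β // y ∈ W → b ≠ j} = Fintype.card β - 1 := by
    intro y hy
    rw [Fintype.card_congr (Equiv.subtypeEquivRight (q := fun b => b ≠ j) (fun b => by simp [hy]))]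
    exact card_ne_subtype j
  have h2 : ∀ y ∈ Wᶜ, Fintype.card {b : β // y ∈ W → b ≠ j} = Fintype.card β := by
    intro y hy
    rw [Finset.mem_compl] at hy
    exact Fintype.card_congr (Equiv.subtypeUnivEquiv (fun b => by simp [hy]))
  rw [Finset.prod_congr rfl h1, Finset.prod_congr rfl h2, Finset.prod_const,
    Finset.prod_const, Finset.card_compl]

lemma card_pair_avoid {V β : Type*} [Fintype V] [DecidableEq V] [Fintype β] [DecidableEq β]
    (T : Finset V) (g : V → V) (hg : Function.Injective g) (hdis : ∀ x ∈ T, g x ∉ T)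
    (i j : β) :
    Fintype.card {χ : V → β // ∀ x ∈ T, ¬(χ x = i ∧ χ (g x) = j)} ≤
      (Fintype.card β ^ 2 - 1) ^ T.card *
        Fintype.card β ^ (Fintype.card V - 2 * T.card) := by
  classical
  set U : Finset V := T ∪ T.image g with hU
  have hdisj : Disjoint T (T.image g) := by
    rw [Finset.disjoint_left]
    intro a haT haI
    obtain ⟨x, hx, rfl⟩ := Finset.mem_image.mp haI
    exact hdis x hx haT
  have hUcard : U.card = 2 * T.card := by
    rw [hU, Finset.card_union_of_disjoint hdisj, Finset.card_image_of_injective _ hg]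
    ring
  -- injection
  let Φ : {χ : V → β // ∀ x ∈ T, ¬(χ x = i ∧ χ (g x) = j)} →
      ({x : V // x ∈ T} → {p : β × β // p ≠ (i, j)}) × ({x : V // x ∉ U} → β) :=
    fun χ => (fun x => ⟨(χ.1 x.1, χ.1 (g x.1)), by
        intro hc
        exact χ.2 x.1 x.2 ⟨congrArg Prod.fst hc, congrArg Prod.snd hc⟩⟩,
      fun x => χ.1 x.1)
  have hΦ : Function.Injective Φ := by
    intro χ χ' hmm
    have h1 := congrArg Prod.fst hmm
    have h2 := congrArg Prod.snd hmm
    simp only [Φ] at h1 h2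
    apply Subtype.ext
    funext y
    by_cases hy : y ∈ T
    · have hval := congrArg Subtype.val (congrFun h1 ⟨y, hy⟩)
      exact congrArg Prod.fst hval
    · by_cases hy2 : y ∈ T.image g
      · obtain ⟨x, hx, rfl⟩ := Finset.mem_image.mp hy2
        have hval := congrArg Subtype.val (congrFun h1 ⟨x, hx⟩)
        exact congrArg Prod.snd hval
      · have hyU : y ∉ U := by
          rw [hU, Finset.mem_union]
          tauto
        exact congrFun h2 ⟨y, hyU⟩
  calc Fintype.card {χ : V → β // ∀ x ∈ T, ¬(χ x = i ∧ χ (g x) = j)}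
      ≤ Fintype.card (({x : V // x ∈ T} → {p : β × β // p ≠ (i, j)}) ×
          ({x : V // x ∉ U} → β)) := Fintype.card_le_of_injective Φ hΦ
    _ = (Fintype.card β ^ 2 - 1) ^ T.card *
          Fintype.card β ^ (Fintype.card V - 2 * T.card) := by
        rw [Fintype.card_prod, Fintype.card_fun, Fintype.card_fun]
        congr 1
        · rw [card_ne_subtype, Fintype.card_prod, sq, Fintype.card_coe]
        · congr 1
          have : Fintype.card {x : V // x ∉ U} = Fintype.card V - U.card := by
            rw [Fintype.card_subtype]
            rw [Finset.filter_not, Finset.filter_mem_eq_inter, Finset.univ_inter,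
              Finset.card_sdiff_of_subset (Finset.subset_univ _), Finset.card_univ]
          rw [this, hUcard]

lemma exists_indep {G : Type*} [AddCommGroup G] [Fintype G] [DecidableEq G]
    (δ : G) (hδ : δ ≠ 0) :
    ∃ T : Finset G, (∀ x ∈ T, x + δ ∉ T) ∧ Fintype.card G ≤ 3 * T.card ∧
      2 * T.card ≤ Fintype.card G := by
  classical
  set S : Finset (Finset G) := Finset.univ.filter (fun T => ∀ x ∈ T, x + δ ∉ T) with hS
  have hne : S.Nonempty := ⟨∅, by simp [hS]⟩
  obtain ⟨T, hTS, hmax⟩ := Finset.exists_max_image S Finset.card hne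
  rw [hS, Finset.mem_filter] at hTS
  have hTP := hTS.2
  refine ⟨T, hTP, ?_, ?_⟩
  case refine_2 =>
    have hdisj : Disjoint T (T.image (fun x => x + δ)) := by
      rw [Finset.disjoint_left]
      intro a haT haI
      obtain ⟨x, hx, rfl⟩ := Finset.mem_image.mp haI
      exact hTP x hx haT
    have h1 : (T ∪ T.image (fun x => x + δ)).card = 2 * T.card := by
      rw [Finset.card_union_of_disjoint hdisj,
        Finset.card_image_of_injective _ (add_left_injective δ)]
      ring
    calc 2 * T.card = _ := h1.symm
      _ ≤ (Finset.univ : Finset G).card := Finset.card_le_card (Finset.subset_univ _)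
      _ = Fintype.card G := Finset.card_univ
  have cover : ∀ y : G, y ∈ T ∨ y + δ ∈ T ∨ y - δ ∈ T := by
    intro y
    by_contra hc
    push_neg at hc
    obtain ⟨h1, h2, h3⟩ := hc
    have hT' : (insert y T) ∈ S := by
      rw [hS, Finset.mem_filter]
      refine ⟨Finset.mem_univ _, ?_⟩
      intro x hx
      rcases Finset.mem_insert.mp hx with rfl | hxT
      · intro hc2
        rcases Finset.mem_insert.mp hc2 with he | hT
        · exact hδ (add_eq_left.mp he)
        · exact h2 hT
      · intro hc2
        rcases Finset.mem_insert.mp hc2 with he | hT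
        · apply h3; rw [← he]; simpa using hxT
        · exact hTP x hxT hT
    have := hmax _ hT'
    rw [Finset.card_insert_of_notMem h1] at this
    omega
  have hsub : (Finset.univ : Finset G) ⊆
      T ∪ T.image (fun x => x - δ) ∪ T.image (fun x => x + δ) := by
    intro y _
    rcases cover y with h | h | h
    · exact Finset.mem_union_left _ (Finset.mem_union_left _ h)
    · refine Finset.mem_union_left _ (Finset.mem_union_right _ ?_)
      exact Finset.mem_image.mpr ⟨y + δ, h, by abel⟩
    · refine Finset.mem_union_right _ ?_
      exact Finset.mem_image.mpr ⟨y - δ, h, by abel⟩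
  have := Finset.card_le_card hsub
  rw [Finset.card_univ] at this
  calc Fintype.card G ≤ _ := this
    _ ≤ 3 * T.card := by
        refine le_trans (Finset.card_union_le _ _) ?_
        have := Finset.card_union_le T (T.image (fun x => x - δ))
        have i1 := Finset.card_image_le (s := T) (f := fun x => x - δ)
        have i2 := Finset.card_image_le (s := T) (f := fun x => x + δ)
        omega

set_option maxHeartbeats 1600000 in
open Finset in
lemma exists_chi {F : Type*} [Field F] [Fintype F] (n : ℕ) (hn : 2 ≤ n)
    (HA : ((Fintype.card F : ℝ))^2 * ((Fintype.card F : ℝ) + 1) * n *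
        (1 - 1/(n:ℝ))^(Fintype.card F - 1) ≤ 1/8)
    (HB : ∀ t : ℕ, Fintype.card F ^ 2 ≤ 3 * t →
        ((Fintype.card F : ℝ))^2 * (n:ℝ)^2 * (1 - 1/(n:ℝ)^2)^t ≤ 1/2) :
    ∃ χ : F × F → Fin n, (∀ (p : F × F) (s : Option F) (j : Fin n),
        ∃ y, slopeRel s p y ∧ χ y = j) ∧
      (∀ δ : F × F, δ ≠ 0 → ∀ i j : Fin n, ∃ x, χ x = i ∧ χ (x + δ) = j) := by
  classical
  set q := Fintype.card F with hqdef
  have hq1 : 1 ≤ q := Fintype.card_pos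
  have hV : Fintype.card (F × F) = q ^ 2 := by rw [Fintype.card_prod]; ring
  have hnR : (2:ℝ) ≤ (n:ℝ) := by exact_mod_cast hn
  have hnpos : (0:ℝ) < n := by linarith
  have hqRpos : (0:ℝ) < q := by exact_mod_cast hq1
  have hnne : (n:ℝ) ≠ 0 := ne_of_gt hnpos
  -- the two bad-event families
  set BadA : (F × F) × Option F × Fin n → Finset (F × F → Fin n) :=
    fun e => univ.filter (fun χ => ∀ y, slopeRel e.2.1 e.1 y → χ y ≠ e.2.2) with hBadA
  set BadB : (F × F) × Fin n × Fin n → Finset (F × F → Fin n) :=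
    fun e => if e.1 = 0 then ∅ else
      univ.filter (fun χ => ∀ x, ¬(χ x = e.2.1 ∧ χ (x + e.1) = e.2.2)) with hBadB
  -- cardinality of each BadA event
  have cardA : ∀ e, ((BadA e).card : ℝ) = (n:ℝ)^(q^2) * (1 - 1/(n:ℝ))^(q-1) := by
    rintro ⟨p, s, j⟩
    have h1 : (BadA (p, s, j)).card
        = Fintype.card {χ : F × F → Fin n // ∀ y, slopeRel s p y → χ y ≠ j} :=
      (Fintype.card_subtype _).symm
    have h2 : Fintype.card {χ : F × F → Fin n // ∀ y, slopeRel s p y → χ y ≠ j}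
        = Fintype.card {χ : F × F → Fin n //
            ∀ y ∈ univ.filter (fun y => slopeRel s p y), χ y ≠ j} := by
      apply Fintype.card_congr
      apply Equiv.subtypeEquivRight
      intro χ
      simp [Finset.mem_filter]
    rw [h1, h2, card_pi_avoid, card_slopeRel, hV, Fintype.card_fin]
    have hsub : q - 1 ≤ q^2 := by nlinarith [hq1, Nat.sub_le q 1]
    have h1n : 1 ≤ n := le_trans one_le_two hn
    have hcast : ((n - 1 : ℕ) : ℝ) = (n:ℝ) - 1 := by
      rw [Nat.cast_sub h1n, Nat.cast_one]
    push_cast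
    rw [hcast]
    have hone : (1 - 1/(n:ℝ)) = ((n:ℝ) - 1) / n := by field_simp
    rw [hone, div_pow]
    have hpow : (n:ℝ)^(q^2) = (n:ℝ)^(q-1) * (n:ℝ)^(q^2 - (q-1)) := by
      rw [← pow_add, Nat.add_sub_cancel' hsub]
    rw [hpow]
    field_simp
    ring
  -- bound on each BadB event
  have cardB : ∀ e, ((BadB e).card : ℝ) ≤ (n:ℝ)^(q^2) / (2 * (q:ℝ)^2 * (n:ℝ)^2) := by
    rintro ⟨δ, i, j⟩
    by_cases hδ : δ = 0
    · simp only [hBadB, hδ, if_pos rfl]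
      simp
      positivity
    · simp only [hBadB, if_neg hδ]
      obtain ⟨T, hTP, hT3, hT2⟩ := exists_indep δ hδ
      rw [hV] at hT3 hT2
      have hsub : (univ.filter (fun χ : F × F → Fin n =>
          ∀ x, ¬(χ x = i ∧ χ (x + δ) = j))) ⊆
          (univ.filter (fun χ : F × F → Fin n =>
            ∀ x ∈ T, ¬(χ x = i ∧ χ (x + δ) = j))) := by
        intro χ hχ
        simp only [Finset.mem_filter, Finset.mem_univ, true_and] at hχ ⊢
        exact fun x _ => hχ x
      have hcard1 := Finset.card_le_card hsub
      have hcard2 : (univ.filter (fun χ : F × F → Fin n =>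
          ∀ x ∈ T, ¬(χ x = i ∧ χ (x + δ) = j))).card
          ≤ (n^2 - 1) ^ T.card * n ^ (q^2 - 2 * T.card) := by
        rw [← Fintype.card_subtype]
        have := card_pair_avoid T (fun x => x + δ) (add_left_injective δ) hTP i j
        rwa [Fintype.card_fin, hV] at this
      have hchain : ((univ.filter (fun χ : F × F → Fin n =>
          ∀ x, ¬(χ x = i ∧ χ (x + δ) = j))).card : ℝ)
          ≤ ((n^2 - 1 : ℕ) : ℝ) ^ T.card * (n:ℝ) ^ (q^2 - 2 * T.card) := by
        exact_mod_cast le_trans hcard1 hcard2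
      refine le_trans hchain ?_
      have h1n2 : 1 ≤ n^2 := Nat.one_le_pow 2 n (lt_of_lt_of_le zero_lt_two hn)
      have hc : ((n^2 - 1 : ℕ) : ℝ) = (n:ℝ)^2 - 1 := by
        rw [Nat.cast_sub h1n2]; push_cast; ring
      have hb : (1 - 1/(n:ℝ)^2) = ((n:ℝ)^2 - 1) / (n:ℝ)^2 := by field_simp
      have heq : ((n^2 - 1 : ℕ) : ℝ) ^ T.card * (n:ℝ) ^ (q^2 - 2 * T.card)
          = (n:ℝ)^(q^2) * (1 - 1/(n:ℝ)^2)^T.card := by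
        rw [hc, hb, div_pow]
        have hpow : (n:ℝ)^(q^2) = ((n:ℝ)^2)^T.card * (n:ℝ)^(q^2 - 2*T.card) := by
          rw [← pow_mul, ← pow_add]
          congr 1
          exact (Nat.add_sub_cancel' hT2).symm
        rw [hpow]
        field_simp
      rw [heq]
      have hhb := HB T.card hT3
      have hbnn : (0:ℝ) ≤ (1 - 1/(n:ℝ)^2) := by
        have h4 : (4:ℝ) ≤ (n:ℝ)^2 := by nlinarith
        have : 1/(n:ℝ)^2 ≤ 1/4 := by
          apply one_div_le_one_div_of_le <;> nlinarith
        linarith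
      have h2q : (0:ℝ) < 2*(q:ℝ)^2*(n:ℝ)^2 := by positivity
      have hbt : (1 - 1/(n:ℝ)^2)^T.card ≤ 1 / (2 * (q:ℝ)^2 * (n:ℝ)^2) := by
        rw [le_div_iff₀ h2q]
        nlinarith [hhb]
      calc (n:ℝ)^(q^2) * (1 - 1/(n:ℝ)^2)^T.card
          ≤ (n:ℝ)^(q^2) * (1 / (2 * (q:ℝ)^2 * (n:ℝ)^2)) :=
            mul_le_mul_of_nonneg_left hbt (by positivity)
        _ = (n:ℝ)^(q^2) / (2 * (q:ℝ)^2 * (n:ℝ)^2) := by ring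
  -- suppose no good χ exists
  by_contra hcon
  have hall : ∀ χ : F × F → Fin n,
      ¬((∀ (p : F × F) (s : Option F) (j : Fin n), ∃ y, slopeRel s p y ∧ χ y = j) ∧
        (∀ δ : F × F, δ ≠ 0 → ∀ i j : Fin n, ∃ x, χ x = i ∧ χ (x + δ) = j)) :=
    fun χ hχ => hcon ⟨χ, hχ⟩
  -- covering
  have cover : (univ : Finset (F × F → Fin n)) ⊆
      (univ : Finset ((F × F) × Option F × Fin n)).biUnion BadA ∪
      (univ : Finset ((F × F) × Fin n × Fin n)).biUnion BadB := by
    intro χ _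
    have hχ := hall χ
    rw [not_and_or] at hχ
    rcases hχ with hA | hB
    · push_neg at hA
      obtain ⟨p, s, j, hpsj⟩ := hA
      apply Finset.mem_union_left
      apply Finset.mem_biUnion.mpr
      refine ⟨(p, s, j), Finset.mem_univ _, ?_⟩
      simp only [hBadA, Finset.mem_filter, Finset.mem_univ, true_and]
      intro y hy
      exact (hpsj y hy)
    · push_neg at hB
      obtain ⟨δ, hδ, i, j, hij⟩ := hB
      apply Finset.mem_union_right
      apply Finset.mem_biUnion.mpr
      refine ⟨(δ, i, j), Finset.mem_univ _, ?_⟩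
      simp only [hBadB, if_neg hδ, Finset.mem_filter, Finset.mem_univ, true_and]
      intro x hx
      exact hij x hx.1 hx.2
  -- count
  have hcount : ((univ : Finset (F × F → Fin n)).card : ℝ)
      ≤ (n:ℝ)^(q^2) * (1/8) + (n:ℝ)^(q^2) * (1/2) := by
    have step1 := Finset.card_le_card cover
    have step2 := Finset.card_union_le
      ((univ : Finset ((F × F) × Option F × Fin n)).biUnion BadA)
      ((univ : Finset ((F × F) × Fin n × Fin n)).biUnion BadB)
    have step3 := Finset.card_biUnion_le
      (s := (univ : Finset ((F × F) × Option F × Fin n))) (t := BadA)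
    have step4 := Finset.card_biUnion_le
      (s := (univ : Finset ((F × F) × Fin n × Fin n))) (t := BadB)
    have hR : ((univ : Finset (F × F → Fin n)).card : ℝ)
        ≤ (∑ e : (F × F) × Option F × Fin n, ((BadA e).card : ℝ))
          + (∑ e : (F × F) × Fin n × Fin n, ((BadB e).card : ℝ)) := by
      push_cast
      exact_mod_cast le_trans step1 (le_trans step2 (by exact_mod_cast add_le_add step3 step4))
    refine le_trans hR (add_le_add ?_ ?_)
    · have : (∑ e : (F × F) × Option F × Fin n, ((BadA e).card : ℝ))
          = (Fintype.card ((F × F) × Option F × Fin n) : ℝ)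
            * ((n:ℝ)^(q^2) * (1 - 1/(n:ℝ))^(q-1)) := by
        rw [Finset.sum_congr rfl (fun e _ => cardA e), Finset.sum_const, Finset.card_univ,
          nsmul_eq_mul]
      rw [this]
      have hcardI : (Fintype.card ((F × F) × Option F × Fin n) : ℝ)
          = (q:ℝ)^2 * ((q:ℝ) + 1) * n := by
        simp only [Fintype.card_prod, Fintype.card_option, Fintype.card_fin, ← hqdef]
        push_cast
        ring
      rw [hcardI]
      have ha : (0:ℝ) ≤ (1 - 1/(n:ℝ)) := by
        have : 1/(n:ℝ) ≤ 1/2 := by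
          apply one_div_le_one_div_of_le <;> linarith
        linarith
      have hnq : (0:ℝ) ≤ (n:ℝ)^(q^2) := by positivity
      calc (q:ℝ)^2 * ((q:ℝ) + 1) * n * ((n:ℝ)^(q^2) * (1 - 1/(n:ℝ))^(q-1))
          = (n:ℝ)^(q^2) * ((q:ℝ)^2 * ((q:ℝ) + 1) * n * (1 - 1/(n:ℝ))^(q-1)) := by ring
        _ ≤ (n:ℝ)^(q^2) * (1/8) := mul_le_mul_of_nonneg_left HA hnq
    · have hsum : (∑ e : (F × F) × Fin n × Fin n, ((BadB e).card : ℝ))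
          ≤ (Fintype.card ((F × F) × Fin n × Fin n) : ℝ)
            * ((n:ℝ)^(q^2) / (2 * (q:ℝ)^2 * (n:ℝ)^2)) := by
        calc (∑ e : (F × F) × Fin n × Fin n, ((BadB e).card : ℝ))
            ≤ ∑ _e : (F × F) × Fin n × Fin n, (n:ℝ)^(q^2) / (2 * (q:ℝ)^2 * (n:ℝ)^2) :=
              Finset.sum_le_sum (fun e _ => cardB e)
          _ = _ := by rw [Finset.sum_const, Finset.card_univ, nsmul_eq_mul]
      refine le_trans hsum ?_
      have hcardI : (Fintype.card ((F × F) × Fin n × Fin n) : ℝ) = (q:ℝ)^2 * (n:ℝ)^2 := by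
        simp only [Fintype.card_prod, Fintype.card_fin, ← hqdef]
        push_cast
        ring
      rw [hcardI]
      rw [div_eq_mul_inv]
      have : (q:ℝ)^2 * (n:ℝ)^2 * ((n:ℝ)^(q^2) * (2 * (q:ℝ)^2 * (n:ℝ)^2)⁻¹)
          = (n:ℝ)^(q^2) * (1/2) := by
        field_simp
      rw [this]
  -- contradiction
  have hNcard : ((univ : Finset (F × F → Fin n)).card : ℝ) = (n:ℝ)^(q^2) := by
    rw [Finset.card_univ, Fintype.card_fun, Fintype.card_fin, hV]
    push_cast
    ring
  rw [hNcard] at hcount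
  have hpos : (0:ℝ) < (n:ℝ)^(q^2) := by positivity
  nlinarith [hcount, hpos]

lemma aux_le_eighth (E X : ℝ) (hE : (1:ℝ) ≤ E) (hX : 0 ≤ X) (h8 : E*(8*X) ≤ 1) :
    X ≤ 1/8 := by nlinarith

lemma numeric1 (l2 u : ℝ) (hl2a : (0.693:ℝ) < l2) (hl2b : l2 < (0.694:ℝ))
    (hu : 4*l2 + 1/5 ≤ u) :
    3*l2 + 12*u ≤ (4*l2 + 1 + 3*u)^2/4 := by
  have h1 : (0:ℝ) ≤ u - (4*l2 + 1/5) := by linarith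
  have h96 : (0:ℝ) ≤ 96*l2 - 38.4 := by linarith
  nlinarith [mul_nonneg h96 h1, sq_nonneg (l2 - 0.693), sq_nonneg (u - (4*l2+1/5))]

set_option maxHeartbeats 1600000 in
lemma numeric2 (q : ℕ) (E : ℝ) (hE : (2.7182818283:ℝ) < E) (h2 : 2 ≤ q) (h19 : q ≤ 19)
    (hm : E * (4*(q:ℝ)^2) * (4*((q:ℝ)+1)) * ((1:ℝ)/2)^(q-1) ≤ 1) : False := by
  interval_cases q <;> norm_num at hm <;> nlinarith [hm, hE]



/-- A coloring `f : D × D → Fin n` (of the edges between `D = F × F` and a disjoint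
copy of `D`) is good if it satisfies the witness conditions (1a), (1b), (2a), (2b)
needed to turn the standard representation of `𝔏(q,1)` into one of `𝔏(q,n)`. -/
def IsGood {F : Type*} [Field F] {n : ℕ} (f : (F × F) × (F × F) → Fin n) : Prop :=
  (∀ u v : F × F, u ≠ v → ∀ i j : Fin n, ∃ z : F × F, f (u, z) = i ∧ f (v, z) = j) ∧
  (∀ u v : F × F, u ≠ v → ∀ i j : Fin n, ∃ z : F × F, f (z, u) = i ∧ f (z, v) = j) ∧
  (∀ u z : F × F, ∀ s : Option F, ∀ j : Fin n,
    ∃ w : F × F, slopeRel s u w ∧ f (w, z) = j) ∧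
  (∀ u z : F × F, ∀ s : Option F, ∀ j : Fin n,
    ∃ w : F × F, slopeRel s z w ∧ f (u, w) = j)

set_option maxHeartbeats 1600000 in
/-- Local-lemma existence of a good coloring: if `e · 4q² · 2n(q+1) · (1 − 1/n)^(q−1) ≤ 1`
and moreover `n²(1 − 1/n²)^(q²) ≤ 2n(q+1)(1 − 1/n)^(q−1)`, then a good coloring
`f : D × D → Fin n` exists. -/
theorem stmt9 (q n : ℕ) (hq : IsPrimePow q) (hn : 2 ≤ n)
    (h : Real.exp 1 * (4 * (q : ℝ) ^ 2) * (2 * n * ((q : ℝ) + 1))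
          * (1 - 1 / (n : ℝ)) ^ (q - 1) ≤ 1)
    (h' : (n : ℝ) ^ 2 * (1 - 1 / (n : ℝ) ^ 2) ^ (q ^ 2)
          ≤ 2 * n * ((q : ℝ) + 1) * (1 - 1 / (n : ℝ)) ^ (q - 1))
    (F : Type*) [Field F] [Fintype F] (hcard : Fintype.card F = q) :
    ∃ f : (F × F) × (F × F) → Fin n, IsGood f := by
  classical
  have hq2 : 2 ≤ q := hq.two_le
  have hqR : (2:ℝ) ≤ (q:ℝ) := by exact_mod_cast hq2
  have hqRpos : (0:ℝ) < q := by linarith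
  have hnR : (2:ℝ) ≤ (n:ℝ) := by exact_mod_cast hn
  have hnpos : (0:ℝ) < n := by linarith
  have hE1 : (2.7182818283:ℝ) < Real.exp 1 := Real.exp_one_gt_d9
  have hEpos : (0:ℝ) < Real.exp 1 := Real.exp_pos 1
  set a : ℝ := 1 - 1/(n:ℝ) with hadef
  set b : ℝ := 1 - 1/(n:ℝ)^2 with hbdef
  have hinv_n : 1/(n:ℝ) ≤ 1/2 := by
    rw [div_le_div_iff₀ hnpos (by norm_num)]; linarith
  have ha0 : 0 ≤ a := by rw [hadef]; linarith
  have ha2 : (1:ℝ)/2 ≤ a := by rw [hadef]; linarith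
  have hb0 : 0 ≤ b := by
    have : 1/(n:ℝ)^2 ≤ 1/4 := by
      rw [div_le_div_iff₀ (by positivity) (by norm_num)]; nlinarith
    rw [hbdef]; linarith
  have hb1 : b ≤ 1 := by
    have : 0 ≤ 1/(n:ℝ)^2 := by positivity
    rw [hbdef]; linarith
  have hP0 : 0 ≤ a^(q-1) := pow_nonneg ha0 _
  -- HA
  have HA : (q:ℝ)^2 * ((q:ℝ) + 1) * n * a^(q-1) ≤ 1/8 := by
    have hX0 : 0 ≤ (q:ℝ)^2 * ((q:ℝ) + 1) * n * a^(q-1) := by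
      have : (0:ℝ) ≤ (q:ℝ)^2 * ((q:ℝ) + 1) * n := by positivity
      exact mul_nonneg this hP0
    refine aux_le_eighth (Real.exp 1) _ (by linarith) hX0 ?_
    calc Real.exp 1 * (8 * ((q:ℝ)^2 * ((q:ℝ) + 1) * n * a^(q-1)))
        = Real.exp 1 * (4 * (q:ℝ)^2) * (2*n*((q:ℝ)+1)) * a^(q-1) := by ring
      _ ≤ 1 := h
  -- HB
  have HB : ∀ t : ℕ, q^2 ≤ 3*t → (q:ℝ)^2 * (n:ℝ)^2 * b^t ≤ 1/2 := by
    intro t ht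
    by_cases hq19 : q ≤ 19
    · -- small q: the hypothesis h is contradictory
      exfalso
      have hlow : ((1:ℝ)/2)^(q-1) ≤ a^(q-1) := pow_le_pow_left₀ (by norm_num) ha2 _
      have hmon : Real.exp 1 * (4*(q:ℝ)^2) * (4*((q:ℝ)+1)) * ((1:ℝ)/2)^(q-1) ≤ 1 := by
        have e1 : Real.exp 1 * (4*(q:ℝ)^2) * (4*((q:ℝ)+1)) * ((1:ℝ)/2)^(q-1)
            ≤ Real.exp 1 * (4*(q:ℝ)^2) * (2*n*((q:ℝ)+1)) * a^(q-1) := by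
          have c1 : (0:ℝ) ≤ Real.exp 1 * (4*(q:ℝ)^2) := by positivity
          have c2 : 4*((q:ℝ)+1) ≤ 2*n*((q:ℝ)+1) := by nlinarith
          have c3 : (0:ℝ) ≤ ((1:ℝ)/2)^(q-1) := by positivity
          calc Real.exp 1 * (4*(q:ℝ)^2) * (4*((q:ℝ)+1)) * ((1:ℝ)/2)^(q-1)
              ≤ Real.exp 1 * (4*(q:ℝ)^2) * (2*n*((q:ℝ)+1)) * ((1:ℝ)/2)^(q-1) :=
                mul_le_mul_of_nonneg_right (mul_le_mul_of_nonneg_left c2 c1) c3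
            _ ≤ Real.exp 1 * (4*(q:ℝ)^2) * (2*n*((q:ℝ)+1)) * a^(q-1) := by
                have c4 : (0:ℝ) ≤ Real.exp 1 * (4*(q:ℝ)^2) * (2*n*((q:ℝ)+1)) := by positivity
                exact mul_le_mul_of_nonneg_left hlow c4
        linarith [e1, h]
      exact numeric2 q (Real.exp 1) hE1 hq2 hq19 hmon
    · -- large q
      push_neg at hq19
      have hq20 : (20:ℝ) ≤ (q:ℝ) := by exact_mod_cast hq19
      -- Step i : a^(q-1) ≤ 1/(16 e q³)
      have hkey : 16*(q:ℝ)^3 ≤ 4*(q:ℝ)^2*(2*n*((q:ℝ)+1)) := by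
        have c1 : (0:ℝ) ≤ ((n:ℝ)-2) * ((q:ℝ)^2*((q:ℝ)+1)) := by
          apply mul_nonneg (by linarith)
          positivity
        nlinarith [c1, sq_nonneg (q:ℝ), hqRpos]
      have hEP : 0 ≤ Real.exp 1 * a^(q-1) := mul_nonneg hEpos.le hP0
      have h16 : 16*Real.exp 1*(q:ℝ)^3*a^(q-1) ≤ 1 := by
        calc 16*Real.exp 1*(q:ℝ)^3*a^(q-1)
            = (16*(q:ℝ)^3) * (Real.exp 1 * a^(q-1)) := by ring
          _ ≤ (4*(q:ℝ)^2*(2*n*((q:ℝ)+1))) * (Real.exp 1 * a^(q-1)) :=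
              mul_le_mul_of_nonneg_right hkey hEP
          _ = Real.exp 1 * (4*(q:ℝ)^2) * (2*n*((q:ℝ)+1)) * a^(q-1) := by ring
          _ ≤ 1 := h
      have hKpos : (0:ℝ) < 16*Real.exp 1*(q:ℝ)^3 := by positivity
      have hstep1 : a^(q-1) ≤ 1/(16*Real.exp 1*(q:ℝ)^3) := by
        rw [le_div_iff₀ hKpos]; linarith [h16]
      -- Step ii : exp(-2/n) ≤ a
      set x : ℝ := 1/(n:ℝ) with hxdef
      have hx0 : 0 < x := by positivity
      have hx2 : x ≤ 1/2 := hinv_n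
      have hexp2 : Real.exp (-(2*x)) ≤ a := by
        have h1 : 1 + 2*x ≤ Real.exp (2*x) := by
          have := Real.add_one_le_exp (2*x); linarith
        have h2 : Real.exp (-(2*x)) = (Real.exp (2*x))⁻¹ := Real.exp_neg _
        have h3 : (Real.exp (2*x))⁻¹ ≤ (1+2*x)⁻¹ := by
          apply inv_anti₀ (by linarith) h1
        have h4 : (1+2*x)⁻¹ ≤ 1 - x := by
          rw [inv_eq_one_div, div_le_iff₀ (by linarith)]
          nlinarith
        rw [hadef]; rw [h2]; exact le_trans h3 (le_trans h4 (le_of_eq rfl))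
      -- Step iii/iv : L ≤ 2 x (q-1)
      set L : ℝ := Real.log (16*Real.exp 1*(q:ℝ)^3) with hLdef
      have hKval : Real.exp L = 16*Real.exp 1*(q:ℝ)^3 := Real.exp_log hKpos
      have hm : ((q-1 : ℕ):ℝ) = (q:ℝ) - 1 := by
        rw [Nat.cast_sub (le_trans one_le_two hq2), Nat.cast_one]
      have hstep3 : Real.exp (-(2*x) * ((q-1:ℕ):ℝ)) ≤ 1/(16*Real.exp 1*(q:ℝ)^3) := by
        have e1 : Real.exp (-(2*x))^(q-1) ≤ a^(q-1) :=
          pow_le_pow_left₀ (Real.exp_nonneg _) hexp2 _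
        have e2 : Real.exp (-(2*x) * ((q-1:ℕ):ℝ)) = Real.exp (-(2*x))^(q-1) := by
          rw [mul_comm, Real.exp_nat_mul]
        rw [e2]
        exact le_trans e1 hstep1
      have hLm : L ≤ 2*x*((q:ℝ)-1) := by
        have e3 : (1:ℝ)/(16*Real.exp 1*(q:ℝ)^3) = Real.exp (-L) := by
          rw [Real.exp_neg, hKval, inv_eq_one_div]
        rw [e3] at hstep3
        have := Real.exp_le_exp.mp hstep3
        rw [hm] at this
        linarith
      -- Step v : value of L
      have l16 : Real.log ((16:ℝ)) = 4*Real.log 2 := by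
        rw [show (16:ℝ) = 2^(4:ℕ) by norm_num, Real.log_pow]
        push_cast; ring
      have hne1 : (16:ℝ)*Real.exp 1 ≠ 0 := by positivity
      have hne2 : ((q:ℝ))^3 ≠ 0 := by positivity
      have hLval : L = 4*Real.log 2 + 1 + 3*Real.log q := by
        rw [hLdef, Real.log_mul hne1 hne2,
          Real.log_mul (by norm_num) (by positivity), l16, Real.log_exp, Real.log_pow]
        push_cast
        ring
      set l2 : ℝ := Real.log 2 with hl2def
      set u : ℝ := Real.log q with hudef
      have hl2a : (0.6931471803:ℝ) < l2 := Real.log_two_gt_d9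
      have hl2b : l2 < (0.6931471808:ℝ) := Real.log_two_lt_d9
      have hu20 : Real.log 20 ≤ u := by
        rw [hudef]; exact Real.log_le_log (by norm_num) hq20
      have hlog20 : 4*l2 + 1/5 ≤ Real.log 20 := by
        have e1 : (20:ℝ) = 2^4 * (5/4) := by norm_num
        have e2 : Real.log 20 = 4*l2 + Real.log (5/4) := by
          rw [e1, Real.log_mul (by norm_num) (by norm_num), Real.log_pow]
          push_cast; ring
        have e3 : (1:ℝ)/5 ≤ Real.log (5/4) := by
          have e4 : Real.log (4/5:ℝ) ≤ (4/5:ℝ) - 1 := Real.log_le_sub_one_of_pos (by norm_num)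
          have e5 : Real.log ((4/5:ℝ)⁻¹) = -Real.log (4/5:ℝ) := Real.log_inv _
          have e6 : ((4/5:ℝ)⁻¹) = (5/4:ℝ) := by norm_num
          rw [e6] at e5
          rw [e5]; linarith
        linarith
      have hu : 4*l2 + 1/5 ≤ u := le_trans hlog20 hu20
      have hl2a' : (0.693:ℝ) < l2 := lt_trans (by norm_num) hl2a
      have hl2b' : l2 < (0.694:ℝ) := lt_trans hl2b (by norm_num)
      -- Step vi : numeric inequality  L²/4 ≥ 3 l2 + 12 u
      have hL0 : 0 ≤ L := by rw [hLval]; linarith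
      have hLsq : 3*l2 + 12*u ≤ L^2/4 := by
        rw [hLval]
        exact numeric1 l2 u hl2a' hl2b' hu
      -- Step vii : q²/n² ≥ L²/4
      have hxq : L ≤ 2*(q:ℝ)/n := by
        have e1 : 2*x*((q:ℝ)-1) ≤ 2*x*(q:ℝ) := by nlinarith [hx0]
        have e2 : 2*x*(q:ℝ) = 2*(q:ℝ)/(n:ℝ) := by rw [hxdef]; ring
        linarith [hLm]
      have hq2n2 : L^2/4 ≤ (q:ℝ)^2/(n:ℝ)^2 := by
        have e1 : L^2 ≤ (2*(q:ℝ)/n)^2 := pow_le_pow_left₀ hL0 hxq 2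
        have e2 : (2*(q:ℝ)/n)^2 = 4*((q:ℝ)^2/(n:ℝ)^2) := by ring
        rw [e2] at e1
        linarith
      -- Step: n ≤ q
      have hnq : (n:ℝ) ≤ (q:ℝ) := by
        have hL2 : (2:ℝ) ≤ L := by rw [hLval]; linarith
        have hmul := mul_le_mul_of_nonneg_left hLm hnpos.le
        have hxn : (n:ℝ) * (2*x*((q:ℝ)-1)) = 2*((q:ℝ)-1) := by
          rw [hxdef]; field_simp
        have hnL : (n:ℝ) * L ≤ 2*((q:ℝ)-1) := by rw [← hxn]; exact hmul
        have h2n : (n:ℝ) * 2 ≤ (n:ℝ) * L := mul_le_mul_of_nonneg_left hL2 hnpos.le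
        linarith
      -- Step viii/ix/x : q⁶ n⁶ b^{q²} ≤ 1/8
      have hbq : b^(q^2) ≤ 1/(8*(q:ℝ)^12) := by
        have e1 : b ≤ Real.exp (-(1/(n:ℝ)^2)) := by
          have := Real.add_one_le_exp (-(1/(n:ℝ)^2))
          rw [hbdef]; linarith
        have e2 : b^(q^2) ≤ Real.exp (-(1/(n:ℝ)^2))^(q^2) :=
          pow_le_pow_left₀ hb0 e1 _
        have e3 : Real.exp (-(1/(n:ℝ)^2))^(q^2) = Real.exp (-((q:ℝ)^2/(n:ℝ)^2)) := by
          rw [← Real.exp_nat_mul]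
          congr 1
          push_cast
          ring
        have e4 : Real.exp (-((q:ℝ)^2/(n:ℝ)^2)) ≤ Real.exp (-(3*l2 + 12*u)) := by
          apply Real.exp_le_exp.mpr
          have := le_trans hLsq hq2n2
          linarith
        have e5 : Real.exp (-(3*l2 + 12*u)) = 1/(8*(q:ℝ)^12) := by
          rw [Real.exp_neg]
          rw [show (3:ℝ)*l2 + 12*u = ((3:ℕ):ℝ)*l2 + ((12:ℕ):ℝ)*u by push_cast; ring]
          rw [Real.exp_add, Real.exp_nat_mul, Real.exp_nat_mul, hl2def, hudef,
            Real.exp_log (by norm_num : (0:ℝ) < 2), Real.exp_log hqRpos]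
          norm_num
        calc b^(q^2) ≤ _ := e2
          _ = _ := e3
          _ ≤ _ := e4
          _ = _ := e5
      have hfinal : (q:ℝ)^6 * (n:ℝ)^6 * b^(q^2) ≤ 1/8 := by
        have e1 : (n:ℝ)^6 ≤ (q:ℝ)^6 := pow_le_pow_left₀ hnpos.le hnq 6
        have e2 : (q:ℝ)^6 * (n:ℝ)^6 * b^(q^2) ≤ (q:ℝ)^6 * (q:ℝ)^6 * (1/(8*(q:ℝ)^12)) := by
          have c1 : (q:ℝ)^6 * (n:ℝ)^6 ≤ (q:ℝ)^6 * (q:ℝ)^6 :=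
            mul_le_mul_of_nonneg_left e1 (by positivity)
          have c2 : 0 ≤ b^(q^2) := pow_nonneg hb0 _
          have c3 : 0 ≤ (q:ℝ)^6 * (n:ℝ)^6 := by positivity
          calc (q:ℝ)^6 * (n:ℝ)^6 * b^(q^2)
              ≤ (q:ℝ)^6 * (n:ℝ)^6 * (1/(8*(q:ℝ)^12)) :=
                mul_le_mul_of_nonneg_left hbq c3
            _ ≤ (q:ℝ)^6 * (q:ℝ)^6 * (1/(8*(q:ℝ)^12)) :=
                mul_le_mul_of_nonneg_right c1 (by positivity)
        have e3 : (q:ℝ)^6 * (q:ℝ)^6 * (1/(8*(q:ℝ)^12)) = 1/8 := by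
          field_simp
        linarith [e2, e3.le, e3.ge]
      -- conclude for the given t
      have hX0 : 0 ≤ (q:ℝ)^2 * (n:ℝ)^2 * b^t := by
        have := pow_nonneg hb0 t
        positivity
      have hXcube : ((q:ℝ)^2 * (n:ℝ)^2 * b^t)^3 ≤ (1/2)^3 := by
        have e1 : ((q:ℝ)^2 * (n:ℝ)^2 * b^t)^3 = (q:ℝ)^6 * (n:ℝ)^6 * b^(t*3) := by
          rw [pow_mul]
          ring
        have e2 : b^(t*3) ≤ b^(q^2) := pow_le_pow_of_le_one hb0 hb1 (by omega)
        have e3 : (0:ℝ) ≤ (q:ℝ)^6 * (n:ℝ)^6 := by positivity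
        calc ((q:ℝ)^2 * (n:ℝ)^2 * b^t)^3 = (q:ℝ)^6 * (n:ℝ)^6 * b^(t*3) := e1
          _ ≤ (q:ℝ)^6 * (n:ℝ)^6 * b^(q^2) := mul_le_mul_of_nonneg_left e2 e3
          _ ≤ 1/8 := hfinal
          _ = (1/2)^3 := by norm_num
      exact le_of_pow_le_pow_left₀ (by norm_num) (by norm_num) hXcube
  -- apply the combinatorial lemma
  have HA' : ((Fintype.card F : ℝ))^2 * ((Fintype.card F : ℝ) + 1) * n *
      (1 - 1/(n:ℝ))^(Fintype.card F - 1) ≤ 1/8 := by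
    rw [hcard]; exact HA
  have HB' : ∀ t : ℕ, Fintype.card F ^ 2 ≤ 3 * t →
      ((Fintype.card F : ℝ))^2 * (n:ℝ)^2 * (1 - 1/(n:ℝ)^2)^t ≤ 1/2 := by
    rw [hcard]; exact HB
  obtain ⟨χ, hGA, hGB⟩ := exists_chi (F := F) n hn HA' HB'
  refine ⟨fun wz => χ (wz.1 + wz.2), ?_, ?_, ?_, ?_⟩
  · -- (1a)
    intro u v huv i j
    obtain ⟨y, hy1, hy2⟩ := hGB (v - u) (sub_ne_zero.mpr (Ne.symm huv)) i j
    refine ⟨y - u, ?_, ?_⟩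
    · show χ (u + (y - u)) = i
      rw [show u + (y - u) = y by abel]; exact hy1
    · show χ (v + (y - u)) = j
      rw [show v + (y - u) = y + (v - u) by abel]; exact hy2
  · -- (1b)
    intro u v huv i j
    obtain ⟨y, hy1, hy2⟩ := hGB (v - u) (sub_ne_zero.mpr (Ne.symm huv)) i j
    refine ⟨y - u, ?_, ?_⟩
    · show χ ((y - u) + u) = i
      rw [show (y - u) + u = y by abel]; exact hy1
    · show χ ((y - u) + v) = j
      rw [show (y - u) + v = y + (v - u) by abel]; exact hy2
  · -- (2a)
    intro u z s j
    obtain ⟨y, hy1, hy2⟩ := hGA (u + z) s j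
    refine ⟨y - z, ?_, ?_⟩
    · have hyz : (y - z) + z = y := by abel
      rw [← hyz] at hy1
      exact (slopeRel_add s u (y - z) z).mp hy1
    · show χ ((y - z) + z) = j
      rw [show (y - z) + z = y by abel]; exact hy2
  · -- (2b)
    intro u z s j
    obtain ⟨y, hy1, hy2⟩ := hGA (z + u) s j
    refine ⟨y - u, ?_, ?_⟩
    · have hyu : (y - u) + u = y := by abel
      rw [← hyu] at hy1
      exact (slopeRel_add s z (y - u) u).mp hy1
    · show χ (u + (y - u)) = j
      rw [show u + (y - u) = y by abel]; exact hy2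
end

section
/- (Main theorem, combinatorial form.) For every ε > 0 there exists N such that for all natural numbers n ≥ N and every prime power q with q ≥ n · (log n)^{1+ε}, there exists a good coloring f : D × D → Fin n. (This good coloring yields a square representation of the relation algebra 𝔏(q,n), so 𝔏(q,n) is representable.) -/
open Finset

lemma master {α β γ δ : Type} [Fintype α] [Fintype β] [Fintype γ] [Fintype δ]
    [DecidableEq γ] [DecidableEq δ] [DecidableEq β]
    (e : α × δ → β) (he : Function.Injective e) (P : α → Finset (δ → γ)) :
    Fintype.card {f : β → γ // ∀ a : α, (fun d => f (e (a, d))) ∈ P a}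
      ≤ (∏ a : α, (P a).card) *
        Fintype.card γ ^ (Fintype.card β - Fintype.card α * Fintype.card δ) := by
  classical
  have hinj : Function.Injective
      (fun f : {f : β → γ // ∀ a : α, (fun d => f (e (a, d))) ∈ P a} =>
        ((fun a : α => (⟨fun d => f.1 (e (a, d)), f.2 a⟩ : (P a : Finset (δ → γ)))),
         (fun b : {b : β // b ∉ Set.range e} => f.1 b.1)) :
        _ → (((a : α) → (P a : Finset (δ → γ))) × ({b : β // b ∉ Set.range e} → γ))) := by
    rintro ⟨f, hf⟩ ⟨g, hg⟩ h
    simp only [Prod.mk.injEq] at h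
    ext b
    by_cases hb : b ∈ Set.range e
    · obtain ⟨⟨a, d⟩, rfl⟩ := hb
      have h1 := congrArg Subtype.val (congrFun h.1 a)
      exact congrFun h1 d
    · exact congrFun h.2 ⟨b, hb⟩
  have hcard := Fintype.card_le_of_injective _ hinj
  refine hcard.trans_eq ?_
  have hrange : Fintype.card {b : β // b ∈ Set.range e} = Fintype.card α * Fintype.card δ := by
    rw [← Fintype.card_prod]
    exact (Fintype.card_congr (Equiv.ofInjective e he)).symm
  have hcompl : Fintype.card {b : β // b ∉ Set.range e}
      = Fintype.card β - Fintype.card α * Fintype.card δ := by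
    rw [Fintype.card_subtype_compl, hrange]
  rw [Fintype.card_prod, Fintype.card_pi, Fintype.card_fun, hcompl]
  congr 1
  · exact Finset.prod_congr rfl (fun a _ => Fintype.card_coe _)


instance slopeRel.dec {F : Type*} [Field F] [DecidableEq F] (s : Option F) (u w : F × F) :
    Decidable (slopeRel s u w) := by
  cases s <;> (unfold slopeRel; infer_instance)

lemma card_slope {F : Type} [Field F] [Fintype F] [DecidableEq F] (s : Option F) (u : F × F) :
    Fintype.card {w : F × F // slopeRel s u w} = Fintype.card F - 1 := by
  classical
  cases s with
  | none =>
    have e : {w : F × F // slopeRel none u w} ≃ {y : F // ¬ (y = u.2)} :=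
      { toFun := fun w => ⟨w.1.2, fun h => w.2.2 h.symm⟩
        invFun := fun y => ⟨(u.1, y.1), ⟨rfl, fun h => y.2 h.symm⟩⟩
        left_inv := by
          rintro ⟨⟨a, b⟩, h⟩
          have h1 : u.1 = a := h.1
          simp [h1]
        right_inv := fun y => rfl }
    rw [Fintype.card_congr e, Fintype.card_subtype_compl, Fintype.card_subtype_eq]
  | some s =>
    have e : {w : F × F // slopeRel (some s) u w} ≃ {x : F // ¬ (x = u.1)} :=
      { toFun := fun w => ⟨w.1.1, fun h => w.2.1 h.symm⟩
        invFun := fun x => ⟨(x.1, u.2 + s * (x.1 - u.1)), ⟨fun h => x.2 h.symm, by ring⟩⟩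
        left_inv := by
          rintro ⟨⟨a, b⟩, h⟩
          have h2 : b - u.2 = s * (a - u.1) := h.2
          have h3 : u.2 + s * (a - u.1) = b := by linear_combination -h2
          simp [h3]
        right_inv := fun x => rfl }
    rw [Fintype.card_congr e, Fintype.card_subtype_compl, Fintype.card_subtype_eq]


lemma nat_of_real (n q : ℕ) (hn : 1 ≤ n) (hq : 2 ≤ q)
    (h1 : (q : ℝ) ^ 4 * (n : ℝ) ^ 2 * ((n : ℝ) ^ 2 - 1) ^ q ^ 2 * 4 < (n : ℝ) ^ (2 * q ^ 2))
    (h2 : (q : ℝ) ^ 4 * (((q : ℝ) + 1) * (n : ℝ)) * ((n : ℝ) - 1) ^ (q - 1) * 4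
      < (n : ℝ) ^ (q - 1)) :
    q ^ 4 * n ^ 2 * ((n ^ 2 - 1) ^ q ^ 2 * n ^ (q ^ 4 - 2 * q ^ 2)) * 2
      + q ^ 4 * ((q + 1) * n) * ((n - 1) ^ (q - 1) * n ^ (q ^ 4 - (q - 1))) * 2
      < n ^ q ^ 4 := by
  have hpos : 0 < n := hn
  have hn2 : (1 : ℕ) ≤ n ^ 2 := Nat.one_le_pow _ _ hpos
  have h24 : 2 * q ^ 2 ≤ q ^ 4 := by
    have : 2 ≤ q ^ 2 := by nlinarith
    calc 2 * q ^ 2 ≤ q ^ 2 * q ^ 2 := Nat.mul_le_mul_right _ this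
      _ = q ^ 4 := by ring
  have hq14 : q - 1 ≤ q ^ 4 := by
    have : q ≤ q ^ 4 := Nat.le_self_pow (by norm_num) _
    omega
  have e1 : 2 * q ^ 2 + (q ^ 4 - 2 * q ^ 2) = q ^ 4 := Nat.add_sub_cancel' h24
  have e2 : (q - 1) + (q ^ 4 - (q - 1)) = q ^ 4 := Nat.add_sub_cancel' hq14
  have c1 : ((n ^ 2 - 1 : ℕ) : ℝ) = (n : ℝ) ^ 2 - 1 := by
    rw [Nat.cast_sub hn2]; push_cast; ring
  have c2 : ((n - 1 : ℕ) : ℝ) = (n : ℝ) - 1 := by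
    rw [Nat.cast_sub hn]; simp
  rw [← Nat.cast_lt (α := ℝ)]
  push_cast [c1, c2]
  have key1 : (n : ℝ) ^ q ^ 4 = (n : ℝ) ^ (2 * q ^ 2) * (n : ℝ) ^ (q ^ 4 - 2 * q ^ 2) := by
    rw [← pow_add, e1]
  have key2 : (n : ℝ) ^ q ^ 4 = (n : ℝ) ^ (q - 1) * (n : ℝ) ^ (q ^ 4 - (q - 1)) := by
    rw [← pow_add, e2]
  have p1 : (0 : ℝ) < (n : ℝ) ^ (q ^ 4 - 2 * q ^ 2) := by positivity
  have p2 : (0 : ℝ) < (n : ℝ) ^ (q ^ 4 - (q - 1)) := by positivity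
  have m1 := mul_lt_mul_of_pos_right h1 p1
  have m2 := mul_lt_mul_of_pos_right h2 p2
  rw [← pow_add, e1] at m1
  rw [← pow_add, e2] at m2
  nlinarith [m1, m2]


set_option maxHeartbeats 4000000 in
lemma analytic (ε : ℝ) (n q : ℕ)
    (hlog : 1000 ≤ Real.log n) (hlogε : 1000 ≤ Real.log n ^ ε)
    (hq : (n : ℝ) * Real.log n ^ (1 + ε) ≤ q) :
    1 ≤ n ∧ 2 ≤ q ∧
    ((q : ℝ) ^ 4 * (n : ℝ) ^ 2 * ((n : ℝ) ^ 2 - 1) ^ q ^ 2 * 4 < (n : ℝ) ^ (2 * q ^ 2)) ∧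
    ((q : ℝ) ^ 4 * (((q : ℝ) + 1) * (n : ℝ)) * ((n : ℝ) - 1) ^ (q - 1) * 4
      < (n : ℝ) ^ (q - 1)) := by
  have hn0 : n ≠ 0 := by
    rintro rfl
    rw [Nat.cast_zero, Real.log_zero] at hlog
    norm_num at hlog
  have hn1 : (1 : ℝ) ≤ (n : ℝ) := by exact_mod_cast Nat.one_le_iff_ne_zero.mpr hn0
  have hnpos : (0 : ℝ) < (n : ℝ) := by linarith
  set x := Real.log n with hxdef
  clear_value x
  have hxpos : (0 : ℝ) < x := by linarith
  have hLdef : x ^ (1 + ε) = x * x ^ ε := by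
    rw [Real.rpow_add hxpos, Real.rpow_one]
  have hL : 1000 * 1000 ≤ x ^ (1 + ε) := by
    rw [hLdef]; nlinarith
  have hqR : (1000 : ℝ) * 1000 ≤ (q : ℝ) := by
    have h0 : (0:ℝ) ≤ x ^ (1+ε) := by positivity
    nlinarith
  have hq2 : 2 ≤ q := by
    have : (2 : ℝ) ≤ (q : ℝ) := by linarith
    exact_mod_cast this
  have hqpos : (0 : ℝ) < (q : ℝ) := by linarith
  set t := (q : ℝ) / (n : ℝ) with htdef
  clear_value t
  have hqt : (q : ℝ) = t * (n : ℝ) := by rw [htdef]; field_simp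
  have htL : x * x ^ ε ≤ t := by
    rw [htdef, le_div_iff₀ hnpos, ← hLdef]
    calc x ^ (1 + ε) * n = n * x ^ (1 + ε) := by ring
      _ ≤ q := hq
  have hxt : 1000 * x ≤ t := by nlinarith
  have ht6 : 1000 * 1000 ≤ t := by nlinarith
  have htpos : (0 : ℝ) < t := by linarith
  have hlogq : Real.log q = x + Real.log t := by
    rw [hqt, Real.log_mul (ne_of_gt htpos) (ne_of_gt hnpos), hxdef]; ring
  have hst : (1000 : ℝ) ≤ Real.sqrt t := by
    rw [show (1000:ℝ) = Real.sqrt (1000 * 1000) by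
      rw [show (1000:ℝ) * 1000 = 1000 ^ 2 by ring, Real.sqrt_sq (by norm_num)]]
    exact Real.sqrt_le_sqrt ht6
  have hst2 : Real.sqrt t ^ 2 = t := Real.sq_sqrt (le_of_lt htpos)
  have hsqrt_small : Real.sqrt t ≤ t / 1000 := by nlinarith
  have hlogt : Real.log t ≤ 2 * (t / 1000) := by
    have h1 : Real.log (Real.sqrt t) = Real.log t / 2 := Real.log_sqrt (le_of_lt htpos)
    have h2 : Real.log (Real.sqrt t) ≤ Real.sqrt t - 1 :=
      Real.log_le_sub_one_of_pos (by positivity)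
    nlinarith
  have hlog4 : Real.log 4 ≤ 4 := by
    have := Real.log_le_sub_one_of_pos (by norm_num : (0:ℝ) < 4)
    linarith
  have hlog2 : Real.log 2 ≤ 1 := by
    have := Real.log_le_sub_one_of_pos (by norm_num : (0:ℝ) < 2)
    linarith
  have hxle : x ≤ t / 1000 := by linarith
  refine ⟨Nat.one_le_iff_ne_zero.mpr hn0, hq2, ?_, ?_⟩
  · -- first inequality
    have hbase : (n : ℝ) ^ 2 - 1 ≤ (n : ℝ) ^ 2 * Real.exp (-(1 / (n : ℝ) ^ 2)) := by
      have h := Real.add_one_le_exp (-(1 / (n : ℝ) ^ 2))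
      have hn2pos : (0 : ℝ) < (n : ℝ) ^ 2 := by positivity
      have h2 : (n:ℝ)^2 * (-(1 / (n : ℝ) ^ 2) + 1) ≤ (n:ℝ)^2 * Real.exp (-(1 / (n : ℝ) ^ 2)) :=
        mul_le_mul_of_nonneg_left h (le_of_lt hn2pos)
      have h3 : (n:ℝ)^2 * (-(1 / (n : ℝ) ^ 2) + 1) = (n:ℝ)^2 - 1 := by
        field_simp
        ring
      linarith
    have hpow : ((n : ℝ) ^ 2 - 1) ^ q ^ 2
        ≤ (n : ℝ) ^ (2 * q ^ 2) * Real.exp (-((q : ℝ) ^ 2 / (n : ℝ) ^ 2)) := by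
      calc ((n : ℝ) ^ 2 - 1) ^ q ^ 2
          ≤ ((n : ℝ) ^ 2 * Real.exp (-(1 / (n : ℝ) ^ 2))) ^ q ^ 2 := by
            apply pow_le_pow_left₀ (by nlinarith) hbase
        _ = (n : ℝ) ^ (2 * q ^ 2) * Real.exp (-(1 / (n : ℝ) ^ 2)) ^ q ^ 2 := by
            rw [mul_pow, ← pow_mul]
        _ = (n : ℝ) ^ (2 * q ^ 2) * Real.exp (-((q : ℝ) ^ 2 / (n : ℝ) ^ 2)) := by
            rw [← Real.exp_nat_mul]
            congr 1
            push_cast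
            field_simp
    have hexp : (q : ℝ) ^ 4 * (n : ℝ) ^ 2 * 4 < Real.exp ((q : ℝ) ^ 2 / (n : ℝ) ^ 2) := by
      have hpos4 : (0 : ℝ) < (q : ℝ) ^ 4 * (n : ℝ) ^ 2 * 4 := by positivity
      have hlogexpand : Real.log ((q : ℝ) ^ 4 * (n : ℝ) ^ 2 * 4)
          = 4 * Real.log q + 2 * x + Real.log 4 := by
        rw [Real.log_mul (by positivity) (by norm_num),
          Real.log_mul (by positivity) (by positivity),
          Real.log_pow, Real.log_pow, hxdef]
        push_cast
        ring
      have htsq : (q : ℝ) ^ 2 / (n : ℝ) ^ 2 = t ^ 2 := by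
        rw [htdef]; field_simp
      have hlt : Real.log ((q : ℝ) ^ 4 * (n : ℝ) ^ 2 * 4) < (q : ℝ) ^ 2 / (n : ℝ) ^ 2 := by
        rw [hlogexpand, hlogq, htsq]
        have hsq : t ≤ t ^ 2 := by nlinarith
        linarith
      calc (q : ℝ) ^ 4 * (n : ℝ) ^ 2 * 4
          = Real.exp (Real.log ((q : ℝ) ^ 4 * (n : ℝ) ^ 2 * 4)) := (Real.exp_log hpos4).symm
        _ < Real.exp ((q : ℝ) ^ 2 / (n : ℝ) ^ 2) := Real.exp_lt_exp.mpr hlt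
    calc (q : ℝ) ^ 4 * (n : ℝ) ^ 2 * ((n : ℝ) ^ 2 - 1) ^ q ^ 2 * 4
        = ((q : ℝ) ^ 4 * (n : ℝ) ^ 2 * 4) * ((n : ℝ) ^ 2 - 1) ^ q ^ 2 := by ring
      _ ≤ ((q : ℝ) ^ 4 * (n : ℝ) ^ 2 * 4) *
          ((n : ℝ) ^ (2 * q ^ 2) * Real.exp (-((q : ℝ) ^ 2 / (n : ℝ) ^ 2))) :=
          mul_le_mul_of_nonneg_left hpow (by positivity)
      _ = ((q : ℝ) ^ 4 * (n : ℝ) ^ 2 * 4 * Real.exp (-((q : ℝ) ^ 2 / (n : ℝ) ^ 2))) *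
          (n : ℝ) ^ (2 * q ^ 2) := by ring
      _ < 1 * (n : ℝ) ^ (2 * q ^ 2) := by
          apply mul_lt_mul_of_pos_right _ (by positivity)
          rw [Real.exp_neg, ← div_eq_mul_inv, div_lt_one (Real.exp_pos _)]
          exact hexp
      _ = (n : ℝ) ^ (2 * q ^ 2) := one_mul _
  · -- second inequality
    have hbase : (n : ℝ) - 1 ≤ (n : ℝ) * Real.exp (-(1 / (n : ℝ))) := by
      have h := Real.add_one_le_exp (-(1 / (n : ℝ)))
      have h2 : (n:ℝ) * (-(1 / (n : ℝ)) + 1) ≤ (n:ℝ) * Real.exp (-(1 / (n : ℝ))) :=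
        mul_le_mul_of_nonneg_left h (by linarith)
      have h3 : (n:ℝ) * (-(1 / (n : ℝ)) + 1) = (n:ℝ) - 1 := by
        field_simp
        ring
      linarith
    have hcast : ((q - 1 : ℕ) : ℝ) = (q : ℝ) - 1 := by
      rw [Nat.cast_sub (by omega)]; simp
    have hpow : ((n : ℝ) - 1) ^ (q - 1)
        ≤ (n : ℝ) ^ (q - 1) * Real.exp (-(((q : ℝ) - 1) / (n : ℝ))) := by
      calc ((n : ℝ) - 1) ^ (q - 1)
          ≤ ((n : ℝ) * Real.exp (-(1 / (n : ℝ)))) ^ (q - 1) := by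
            apply pow_le_pow_left₀ (by linarith) hbase
        _ = (n : ℝ) ^ (q - 1) * Real.exp (-(1 / (n : ℝ))) ^ (q - 1) := mul_pow _ _ _
        _ = (n : ℝ) ^ (q - 1) * Real.exp (-(((q : ℝ) - 1) / (n : ℝ))) := by
            rw [← Real.exp_nat_mul, hcast]
            congr 1
            field_simp
    have hfrac : t - 1 ≤ ((q : ℝ) - 1) / (n : ℝ) := by
      have h1 : ((q : ℝ) - 1) / (n : ℝ) = t - 1 / (n : ℝ) := by
        rw [htdef, sub_div]
      have h2 : 1 / (n : ℝ) ≤ 1 := by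
        rw [div_le_one hnpos]; exact hn1
      linarith
    have hexp : (q : ℝ) ^ 4 * (((q : ℝ) + 1) * (n : ℝ)) * 4
        < Real.exp (((q : ℝ) - 1) / (n : ℝ)) := by
      have hpos4 : (0 : ℝ) < (q : ℝ) ^ 4 * (((q : ℝ) + 1) * (n : ℝ)) * 4 := by positivity
      have hlogexpand : Real.log ((q : ℝ) ^ 4 * (((q : ℝ) + 1) * (n : ℝ)) * 4)
          = 4 * Real.log q + Real.log ((q : ℝ) + 1) + x + Real.log 4 := by
        rw [Real.log_mul (by positivity) (by norm_num),
          Real.log_mul (by positivity) (by positivity),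
          Real.log_mul (by positivity) (by positivity), Real.log_pow, hxdef]
        push_cast
        ring
      have hlogq1 : Real.log ((q : ℝ) + 1) ≤ 1 + Real.log q := by
        calc Real.log ((q : ℝ) + 1) ≤ Real.log (2 * q) := by
              apply Real.log_le_log (by positivity)
              linarith
          _ = Real.log 2 + Real.log q := Real.log_mul (by norm_num) (ne_of_gt hqpos)
          _ ≤ 1 + Real.log q := by linarith
      have hlt : Real.log ((q : ℝ) ^ 4 * (((q : ℝ) + 1) * (n : ℝ)) * 4)
          < ((q : ℝ) - 1) / (n : ℝ) := by
        rw [hlogexpand]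
        have hup : 4 * Real.log q + Real.log ((q : ℝ) + 1) + x + Real.log 4
            ≤ 5 * (x + Real.log t) + x + 5 := by
          rw [hlogq] at hlogq1 ⊢
          linarith
        have hfin : 5 * (x + Real.log t) + x + 5 < t - 1 := by linarith
        linarith
      calc (q : ℝ) ^ 4 * (((q : ℝ) + 1) * (n : ℝ)) * 4
          = Real.exp (Real.log ((q : ℝ) ^ 4 * (((q : ℝ) + 1) * (n : ℝ)) * 4)) :=
            (Real.exp_log hpos4).symm
        _ < Real.exp (((q : ℝ) - 1) / (n : ℝ)) := Real.exp_lt_exp.mpr hlt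
    calc (q : ℝ) ^ 4 * (((q : ℝ) + 1) * (n : ℝ)) * ((n : ℝ) - 1) ^ (q - 1) * 4
        = ((q : ℝ) ^ 4 * (((q : ℝ) + 1) * (n : ℝ)) * 4) * ((n : ℝ) - 1) ^ (q - 1) := by ring
      _ ≤ ((q : ℝ) ^ 4 * (((q : ℝ) + 1) * (n : ℝ)) * 4) *
          ((n : ℝ) ^ (q - 1) * Real.exp (-(((q : ℝ) - 1) / (n : ℝ)))) :=
          mul_le_mul_of_nonneg_left hpow (by positivity)
      _ = ((q : ℝ) ^ 4 * (((q : ℝ) + 1) * (n : ℝ)) * 4 * Real.exp (-(((q : ℝ) - 1) / (n : ℝ)))) *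
          (n : ℝ) ^ (q - 1) := by ring
      _ < 1 * (n : ℝ) ^ (q - 1) := by
          apply mul_lt_mul_of_pos_right _ (by positivity)
          rw [Real.exp_neg, ← div_eq_mul_inv, div_lt_one (Real.exp_pos _)]
          exact hexp
      _ = (n : ℝ) ^ (q - 1) := one_mul _


lemma inj_ite {α β : Type*} (c1 c2 : α → β) (h1 : Function.Injective c1)
    (h2 : Function.Injective c2) (hdisj : ∀ a a', c1 a ≠ c2 a') :
    Function.Injective (fun zb : α × Bool => if zb.2 then c2 zb.1 else c1 zb.1) := by
  rintro ⟨z, b⟩ ⟨z', b'⟩ h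
  cases b <;> cases b' <;>
    simp only [Bool.false_eq_true, if_false, if_true] at h
  · rw [h1 h]
  · exact absurd h (hdisj z z')
  · exact absurd h.symm (hdisj z' z)
  · rw [h2 h]

set_option maxHeartbeats 1000000 in
lemma exists_good_of_count (F : Type) [Field F] [Fintype F] [DecidableEq F] (n : ℕ)
    (hcount :
      Fintype.card F ^ 4 * n ^ 2 *
          ((n ^ 2 - 1) ^ Fintype.card F ^ 2 *
            n ^ (Fintype.card F ^ 4 - 2 * Fintype.card F ^ 2)) * 2
        + Fintype.card F ^ 4 * ((Fintype.card F + 1) * n) *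
          ((n - 1) ^ (Fintype.card F - 1) *
            n ^ (Fintype.card F ^ 4 - (Fintype.card F - 1))) * 2
        < n ^ Fintype.card F ^ 4) :
    ∃ f : (F × F) × (F × F) → Fin n, IsGood f := by
  classical
  set q := Fintype.card F with hq
  have hD : Fintype.card (F × F) = q ^ 2 := by
    rw [Fintype.card_prod, ← hq]; ring
  have hDD : Fintype.card ((F × F) × (F × F)) = q ^ 4 := by
    rw [Fintype.card_prod, hD]; ring
  by_contra hbad
  push_neg at hbad
  -- the four families of bad events
  set B1 : Finset (((F × F) × (F × F)) → Fin n) :=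
    Finset.univ.biUnion (fun p : ((F × F) × (F × F)) × Fin n × Fin n =>
      Finset.univ.filter (fun f => p.1.1 ≠ p.1.2 ∧
        ∀ z, ¬(f (p.1.1, z) = p.2.1 ∧ f (p.1.2, z) = p.2.2))) with hB1def
  set B2 : Finset (((F × F) × (F × F)) → Fin n) :=
    Finset.univ.biUnion (fun p : ((F × F) × (F × F)) × Fin n × Fin n =>
      Finset.univ.filter (fun f => p.1.1 ≠ p.1.2 ∧
        ∀ z, ¬(f (z, p.1.1) = p.2.1 ∧ f (z, p.1.2) = p.2.2))) with hB2def
  set B3 : Finset (((F × F) × (F × F)) → Fin n) :=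
    Finset.univ.biUnion (fun p : ((F × F) × (F × F)) × Option F × Fin n =>
      Finset.univ.filter (fun f =>
        ∀ w, slopeRel p.2.1 p.1.1 w → ¬ f (w, p.1.2) = p.2.2)) with hB3def
  set B4 : Finset (((F × F) × (F × F)) → Fin n) :=
    Finset.univ.biUnion (fun p : ((F × F) × (F × F)) × Option F × Fin n =>
      Finset.univ.filter (fun f =>
        ∀ w, slopeRel p.2.1 p.1.2 w → ¬ f (p.1.1, w) = p.2.2)) with hB4def
  -- coverage
  have hcover : (Finset.univ : Finset (((F × F) × (F × F)) → Fin n)) ⊆ B1 ∪ B2 ∪ B3 ∪ B4 := by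
    intro f _
    have h := hbad f
    rw [IsGood] at h
    simp only [Finset.mem_union]
    rcases not_and_or.mp h with h | h
    · push_neg at h
      obtain ⟨u, v, huv, i, j, hz⟩ := h
      refine Or.inl (Or.inl (Or.inl ?_))
      rw [hB1def, Finset.mem_biUnion]
      refine ⟨((u, v), (i, j)), Finset.mem_univ _, ?_⟩
      rw [Finset.mem_filter]
      exact ⟨Finset.mem_univ _, huv, fun z hc => (hz z hc.1) hc.2⟩
    rcases not_and_or.mp h with h | h
    · push_neg at h
      obtain ⟨u, v, huv, i, j, hz⟩ := h
      refine Or.inl (Or.inl (Or.inr ?_))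
      rw [hB2def, Finset.mem_biUnion]
      refine ⟨((u, v), (i, j)), Finset.mem_univ _, ?_⟩
      rw [Finset.mem_filter]
      exact ⟨Finset.mem_univ _, huv, fun z hc => (hz z hc.1) hc.2⟩
    rcases not_and_or.mp h with h | h
    · push_neg at h
      obtain ⟨u, z, s, j, hw⟩ := h
      refine Or.inl (Or.inr ?_)
      rw [hB3def, Finset.mem_biUnion]
      refine ⟨((u, z), (s, j)), Finset.mem_univ _, ?_⟩
      rw [Finset.mem_filter]
      exact ⟨Finset.mem_univ _, fun w hsw => hw w hsw⟩
    · push_neg at h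
      obtain ⟨u, z, s, j, hw⟩ := h
      refine Or.inr ?_
      rw [hB4def, Finset.mem_biUnion]
      refine ⟨((u, z), (s, j)), Finset.mem_univ _, ?_⟩
      rw [Finset.mem_filter]
      exact ⟨Finset.mem_univ _, fun w hsw => hw w hsw⟩
  -- generic bound for events of type (1a)/(1b)
  have key12 : ∀ (c1 c2 : (F × F) → ((F × F) × (F × F))),
      Function.Injective (fun zb : (F × F) × Bool => if zb.2 then c2 zb.1 else c1 zb.1) →
      ∀ i j : Fin n,
      Fintype.card {f : ((F × F) × (F × F)) → Fin n //
          ∀ z : F × F, ¬(f (c1 z) = i ∧ f (c2 z) = j)}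
        ≤ (n ^ 2 - 1) ^ q ^ 2 * n ^ (q ^ 4 - 2 * q ^ 2) := by
    intro c1 c2 hc i j
    have h := master (fun zb : (F × F) × Bool => if zb.2 then c2 zb.1 else c1 zb.1) hc
      (fun _ => Finset.univ.erase (fun b : Bool => if b then j else i))
    have hmono : Fintype.card {f : ((F × F) × (F × F)) → Fin n //
          ∀ z : F × F, ¬(f (c1 z) = i ∧ f (c2 z) = j)}
        ≤ Fintype.card {f : ((F × F) × (F × F)) → Fin n //
          ∀ a : F × F, (fun d => f (if d then c2 a else c1 a)) ∈
            Finset.univ.erase (fun b : Bool => if b then j else i)} := by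
      refine Fintype.card_subtype_mono _ _ ?_
      intro f hf a
      rw [Finset.mem_erase]
      refine ⟨?_, Finset.mem_univ _⟩
      intro heq
      have h0 := congrFun heq false
      have h1 := congrFun heq true
      simp only [Bool.false_eq_true, if_false, if_true] at h0 h1
      exact hf a ⟨h0, h1⟩
    refine hmono.trans (h.trans ?_)
    apply le_of_eq
    have hP : (Finset.univ.erase (fun b : Bool => if b then j else i)).card = n ^ 2 - 1 := by
      rw [Finset.card_erase_of_mem (Finset.mem_univ _), Finset.card_univ, Fintype.card_fun,
        Fintype.card_bool, Fintype.card_fin]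
    rw [Finset.prod_const, Finset.card_univ, hP, hDD, hD, Fintype.card_bool, Fintype.card_fin]
    ring_nf
  -- generic bound for events of type (2a)/(2b)
  have key34 : ∀ (s : Option F) (u : F × F) (c : (F × F) → ((F × F) × (F × F))),
      Function.Injective c → ∀ j : Fin n,
      Fintype.card {f : ((F × F) × (F × F)) → Fin n //
          ∀ w : F × F, slopeRel s u w → ¬ f (c w) = j}
        ≤ (n - 1) ^ (q - 1) * n ^ (q ^ 4 - (q - 1)) := by
    intro s u c hc j
    have hce : Function.Injective
        (fun au : {w : F × F // slopeRel s u w} × Unit => c au.1.1) := by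
      rintro ⟨⟨w, hw⟩, ⟨⟩⟩ ⟨⟨w', hw'⟩, ⟨⟩⟩ h
      cases hc h
      rfl
    have h := master (fun au : {w : F × F // slopeRel s u w} × Unit => c au.1.1) hce
      (fun _ => Finset.univ.erase (fun _ : Unit => j))
    have hmono : Fintype.card {f : ((F × F) × (F × F)) → Fin n //
          ∀ w : F × F, slopeRel s u w → ¬ f (c w) = j}
        ≤ Fintype.card {f : ((F × F) × (F × F)) → Fin n //
          ∀ a : {w : F × F // slopeRel s u w},
            (fun _ : Unit => f (c a.1)) ∈ Finset.univ.erase (fun _ : Unit => j)} := by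
      refine Fintype.card_subtype_mono _ _ ?_
      intro f hf a
      rw [Finset.mem_erase]
      refine ⟨?_, Finset.mem_univ _⟩
      intro heq
      exact hf a.1 a.2 (congrFun heq ())
    refine hmono.trans (h.trans ?_)
    apply le_of_eq
    have hP : (Finset.univ.erase (fun _ : Unit => j)).card = n - 1 := by
      rw [Finset.card_erase_of_mem (Finset.mem_univ _), Finset.card_univ, Fintype.card_fun,
        Fintype.card_unit, Fintype.card_fin, pow_one]
    rw [Finset.prod_const, Finset.card_univ, hP, hDD, card_slope, Fintype.card_unit,
      Fintype.card_fin, mul_one]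
  -- cardinality bounds for the four families
  have hB1card : B1.card ≤ q ^ 4 * n ^ 2 * ((n ^ 2 - 1) ^ q ^ 2 * n ^ (q ^ 4 - 2 * q ^ 2)) := by
    rw [hB1def]
    refine Finset.card_biUnion_le.trans ?_
    refine (Finset.sum_le_card_nsmul _ _ ((n ^ 2 - 1) ^ q ^ 2 * n ^ (q ^ 4 - 2 * q ^ 2)) ?_).trans ?_
    · rintro ⟨⟨u, v⟩, i, j⟩ _
      dsimp only
      by_cases huv : u = v
      · rw [Finset.filter_false_of_mem (fun f _ hf => hf.1 huv), Finset.card_empty]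
        exact Nat.zero_le _
      · rw [← Fintype.card_subtype]
        have hcinj : Function.Injective
            (fun zb : (F × F) × Bool => if zb.2 then ((v, zb.1) : (F × F) × (F × F)) else (u, zb.1)) :=
          inj_ite (fun z => ((u, z) : (F × F) × (F × F))) (fun z => (v, z))
            (fun a b h => congrArg Prod.snd h) (fun a b h => congrArg Prod.snd h)
            (fun a a' h => huv (congrArg Prod.fst h))
        have := key12 (fun z => (u, z)) (fun z => (v, z)) hcinj i j
        refine le_trans (Fintype.card_subtype_mono _ _ ?_) this
        intro f hf z
        exact hf.2 z
    · simp only [smul_eq_mul, Finset.card_univ, Fintype.card_prod, Fintype.card_fin,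
        Fintype.card_option, hD]
      apply le_of_eq
      ring
  have hB2card : B2.card ≤ q ^ 4 * n ^ 2 * ((n ^ 2 - 1) ^ q ^ 2 * n ^ (q ^ 4 - 2 * q ^ 2)) := by
    rw [hB2def]
    refine Finset.card_biUnion_le.trans ?_
    refine (Finset.sum_le_card_nsmul _ _ ((n ^ 2 - 1) ^ q ^ 2 * n ^ (q ^ 4 - 2 * q ^ 2)) ?_).trans ?_
    · rintro ⟨⟨u, v⟩, i, j⟩ _
      dsimp only
      by_cases huv : u = v
      · rw [Finset.filter_false_of_mem (fun f _ hf => hf.1 huv), Finset.card_empty]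
        exact Nat.zero_le _
      · rw [← Fintype.card_subtype]
        have hcinj : Function.Injective
            (fun zb : (F × F) × Bool => if zb.2 then ((zb.1, v) : (F × F) × (F × F)) else (zb.1, u)) :=
          inj_ite (fun z => ((z, u) : (F × F) × (F × F))) (fun z => (z, v))
            (fun a b h => congrArg Prod.fst h) (fun a b h => congrArg Prod.fst h)
            (fun a a' h => huv (congrArg Prod.snd h))
        have := key12 (fun z => (z, u)) (fun z => (z, v)) hcinj i j
        refine le_trans (Fintype.card_subtype_mono _ _ ?_) this
        intro f hf z
        exact hf.2 z
    · simp only [smul_eq_mul, Finset.card_univ, Fintype.card_prod, Fintype.card_fin,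
        Fintype.card_option, hD]
      apply le_of_eq
      ring
  have hB3card : B3.card ≤ q ^ 4 * ((q + 1) * n) * ((n - 1) ^ (q - 1) * n ^ (q ^ 4 - (q - 1))) := by
    rw [hB3def]
    refine Finset.card_biUnion_le.trans ?_
    refine (Finset.sum_le_card_nsmul _ _ ((n - 1) ^ (q - 1) * n ^ (q ^ 4 - (q - 1))) ?_).trans ?_
    · rintro ⟨⟨u, z⟩, s, j⟩ _
      dsimp only
      rw [← Fintype.card_subtype]
      have hcinj : Function.Injective (fun w : F × F => ((w, z) : (F × F) × (F × F))) := by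
        intro w w' h
        exact (Prod.ext_iff.mp h).1
      exact key34 s u _ hcinj j
    · simp only [smul_eq_mul, Finset.card_univ, Fintype.card_prod, Fintype.card_fin,
        Fintype.card_option, hD]
      apply le_of_eq
      ring
  have hB4card : B4.card ≤ q ^ 4 * ((q + 1) * n) * ((n - 1) ^ (q - 1) * n ^ (q ^ 4 - (q - 1))) := by
    rw [hB4def]
    refine Finset.card_biUnion_le.trans ?_
    refine (Finset.sum_le_card_nsmul _ _ ((n - 1) ^ (q - 1) * n ^ (q ^ 4 - (q - 1))) ?_).trans ?_
    · rintro ⟨⟨u, z⟩, s, j⟩ _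
      dsimp only
      rw [← Fintype.card_subtype]
      have hcinj : Function.Injective (fun w : F × F => ((u, w) : (F × F) × (F × F))) := by
        intro w w' h
        exact (Prod.ext_iff.mp h).2
      exact key34 s z _ hcinj j
    · simp only [smul_eq_mul, Finset.card_univ, Fintype.card_prod, Fintype.card_fin,
        Fintype.card_option, hD]
      apply le_of_eq
      ring
  -- put everything together
  have hOmega : Fintype.card (((F × F) × (F × F)) → Fin n) = n ^ q ^ 4 := by
    rw [Fintype.card_fun, Fintype.card_fin, hDD]
  have htot : n ^ q ^ 4 ≤ B1.card + B2.card + B3.card + B4.card := by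
    calc n ^ q ^ 4 = (Finset.univ : Finset (((F × F) × (F × F)) → Fin n)).card := by
          rw [Finset.card_univ, hOmega]
      _ ≤ (B1 ∪ B2 ∪ B3 ∪ B4).card := Finset.card_le_card hcover
      _ ≤ (B1 ∪ B2 ∪ B3).card + B4.card := Finset.card_union_le _ _
      _ ≤ (B1 ∪ B2).card + B3.card + B4.card := by
          have := Finset.card_union_le (B1 ∪ B2) B3
          omega
      _ ≤ B1.card + B2.card + B3.card + B4.card := by
          have := Finset.card_union_le B1 B2
          omega
  have : n ^ q ^ 4 < n ^ q ^ 4 := by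
    calc n ^ q ^ 4 ≤ B1.card + B2.card + B3.card + B4.card := htot
      _ ≤ q ^ 4 * n ^ 2 * ((n ^ 2 - 1) ^ q ^ 2 * n ^ (q ^ 4 - 2 * q ^ 2)) * 2
          + q ^ 4 * ((q + 1) * n) * ((n - 1) ^ (q - 1) * n ^ (q ^ 4 - (q - 1))) * 2 := by
          omega
      _ < n ^ q ^ 4 := hcount
  exact absurd this (lt_irrefl _)

/-- Main theorem, combinatorial form: for every `ε > 0` there is `N` such that for all
`n ≥ N` and every prime power `q ≥ n (log n)^(1+ε)`, a good coloring
`f : D × D → Fin n` exists (yielding a representation of `𝔏(q,n)`). -/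
theorem stmt13 (ε : ℝ) (hε : 0 < ε) :
    ∃ N : ℕ, ∀ n : ℕ, N ≤ n → ∀ q : ℕ, IsPrimePow q →
      (n : ℝ) * Real.log n ^ (1 + ε) ≤ q →
      ∀ (F : Type) [Field F] [Fintype F], Fintype.card F = q →
        ∃ f : (F × F) × (F × F) → Fin n, IsGood f := by
  have t1 : Filter.Tendsto (fun n : ℕ => Real.log n) Filter.atTop Filter.atTop :=
    Real.tendsto_log_atTop.comp tendsto_natCast_atTop_atTop
  have t2 : Filter.Tendsto (fun n : ℕ => Real.log n ^ ε) Filter.atTop Filter.atTop :=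
    (tendsto_rpow_atTop hε).comp t1
  have e1 := t1.eventually_ge_atTop (1000 : ℝ)
  have e2 := t2.eventually_ge_atTop (1000 : ℝ)
  obtain ⟨N, hN⟩ := Filter.eventually_atTop.mp (e1.and e2)
  refine ⟨N, ?_⟩
  intro n hn q _ hqge F _ _ hcard
  letI : DecidableEq F := Classical.decEq F
  obtain ⟨h1000, h1000e⟩ := hN n hn
  obtain ⟨hn1, hq2, h1, h2⟩ := analytic ε n q h1000 h1000e hqge
  apply exists_good_of_count F n
  rw [hcard]
  exact nat_of_real n q hn1 hq2 h1 h2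
end
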